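/- Let q be a prime, N ≥ 1, and fix an index i ∈ {1,…,N}. Let h be a nonzero multilinear polynomial over F_q in the N−1 variables x_j (j ≠ i), let R be an arbitrary F_q-valued function of these N−1 variables, and define Q(x₁,…,x_N) = x_i·h(x_{≠i}) + R(x_{≠i}). Then for every λ ∈ F_q with λ ≠ 0, the Fourier coefficient satisfies |E_{x uniform on F_q^N} ψ(λ·Q(x))| ≤ Pr_{x uniform}[h(x_{≠i}) = 0] ≤ (N−1)/q. -/

import Mathlib

/-- The standard additive character `ψ : F_q → ℂ`, `ψ(t) = exp(2πi·t̃/q)` where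
`t̃ ∈ {0,…,q−1}` is the canonical representative of `t`. -/
noncomputable def stdChar (q : ℕ) [NeZero q] (t : ZMod q) : ℂ :=
  Complex.exp (2 * Real.pi * Complex.I * (t.val : ℂ) / (q : ℂ))


open Finset MvPolynomial


lemma multilinear_nonzero_count {F : Type*} [Field F] [Fintype F] [DecidableEq F] :
    ∀ (n : ℕ) (p : MvPolynomial (Fin n) F), p ≠ 0 → (∀ s ∈ p.support, ∀ j, s j ≤ 1) →
    (Fintype.card F - 1) ^ n ≤ (Finset.univ.filter
      (fun x : Fin n → F => MvPolynomial.eval x p ≠ 0)).card := by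
  intro n
  induction n with
  | zero =>
    intro p hne hml
    obtain ⟨c, rfl⟩ := MvPolynomial.C_surjective (Fin 0) p
    have hc : c ≠ 0 := fun hc => hne (by simp [hc])
    simp only [pow_zero, eval_C]
    rw [Finset.filter_true_of_mem (fun _ _ => hc)]
    simp [Finset.card_univ]
  | succ n ih =>
    intro p hne hml
    set P := MvPolynomial.finSuccEquiv F n p with hP
    set a := P.coeff 1 with haD
    set b := P.coeff 0 with hbD
    have hcc : ∀ (m : Fin n →₀ ℕ) (k : ℕ),
        MvPolynomial.coeff m (P.coeff k) = MvPolynomial.coeff (m.cons k) p :=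
      fun m k => MvPolynomial.finSuccEquiv_coeff_coeff m p k
    have hml' : ∀ k ≤ 1, ∀ s ∈ (P.coeff k).support, ∀ j : Fin n, s j ≤ 1 := by
      intro k hk s hs j
      rw [MvPolynomial.mem_support_iff, hcc] at hs
      have := hml _ (MvPolynomial.mem_support_iff.2 hs) j.succ
      simpa [Finsupp.cons_succ] using this
    have hPform : P = Polynomial.C b + Polynomial.X * Polynomial.C a := by
      ext k m
      match k with
      | 0 => simp [hbD]
      | 1 => simp [haD]
      | (k+2) =>
        simp only [Polynomial.coeff_add, Polynomial.coeff_C, Polynomial.coeff_X_mul,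
          MvPolynomial.coeff_add]
        rw [hcc]
        have : ¬ (m.cons (k+2)) ∈ p.support := by
          intro hmem
          have := hml _ hmem 0
          simp [Finsupp.cons_zero] at this
        rw [MvPolynomial.notMem_support_iff] at this
        simp [this]
    have heval : ∀ (t : F) (y : Fin n → F),
        MvPolynomial.eval (Fin.cons t y) p = MvPolynomial.eval y b + t * MvPolynomial.eval y a := by
      intro t y
      rw [MvPolynomial.eval_eq_eval_mv_eval', ← hP, hPform]
      simp only [Polynomial.map_add, Polynomial.map_mul, Polynomial.map_C, Polynomial.map_X,
        Polynomial.eval_add, Polynomial.eval_mul, Polynomial.eval_C, Polynomial.eval_X]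
      try ring
    have hab : a ≠ 0 ∨ b ≠ 0 := by
      by_contra hcon
      push_neg at hcon
      apply hne
      have : P = 0 := by rw [hPform, hcon.1, hcon.2]; simp
      have := congrArg (MvPolynomial.finSuccEquiv F n).symm this
      simpa [hP] using this
    -- choose g
    obtain ⟨g, hg0, hgml, hgood⟩ :
        ∃ g : MvPolynomial (Fin n) F, g ≠ 0 ∧ (∀ s ∈ g.support, ∀ j, s j ≤ 1) ∧
          ∀ y : Fin n → F, MvPolynomial.eval y g ≠ 0 →
            Fintype.card F - 1 ≤
              (Finset.univ.filter (fun t : F => MvPolynomial.eval (Fin.cons t y) p ≠ 0)).card := by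
      rcases eq_or_ne a 0 with ha | ha
      · refine ⟨b, hab.resolve_left (by simp [ha]), hml' 0 (by norm_num), ?_⟩
        intro y hy
        have : ∀ t : F, MvPolynomial.eval (Fin.cons t y) p ≠ 0 := by
          intro t; rw [heval, ha]; simpa using hy
        rw [Finset.filter_true_of_mem (fun t _ => this t), Finset.card_univ]
        exact Nat.sub_le _ _
      · refine ⟨a, ha, hml' 1 le_rfl, ?_⟩
        intro y hy
        have hzero : (Finset.univ.filter
            (fun t : F => ¬ MvPolynomial.eval (Fin.cons t y) p ≠ 0)).card ≤ 1 := by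
          apply Finset.card_le_one.2
          intro t1 h1 t2 h2
          simp only [Finset.mem_filter, not_not] at h1 h2
          rw [heval] at h1 h2
          have := h1.2.trans h2.2.symm
          have := add_left_cancel this
          exact mul_right_cancel₀ hy this
        have hsplit := Finset.card_filter_add_card_filter_not
          (s := (Finset.univ : Finset F))
          (p := fun t : F => MvPolynomial.eval (Fin.cons t y) p ≠ 0)
        rw [Finset.card_univ] at hsplit
        omega
    -- counting
    have key : (Fintype.card F - 1) ^ n * (Fintype.card F - 1) ≤
        (Finset.univ.filter (fun x : Fin (n+1) → F => MvPolynomial.eval x p ≠ 0)).card := by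
      rw [Finset.card_filter,
        ← Equiv.sum_comp (Fin.consEquiv (fun _ => F))
          (fun x => if MvPolynomial.eval x p ≠ 0 then 1 else 0),
        Fintype.sum_prod_type, Finset.sum_comm]
      have hre : ∀ (y : Fin n → F) (t : F),
          (if MvPolynomial.eval ((Fin.consEquiv (fun _ => F)) (t, y)) p ≠ 0 then 1 else 0)
            = (if MvPolynomial.eval (Fin.cons t y) p ≠ 0 then 1 else 0) := fun y t => rfl
      have step1 : ∀ y ∈ Finset.univ.filter (fun y : Fin n → F => MvPolynomial.eval y g ≠ 0),
          (Fintype.card F - 1) ≤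
            ∑ t : F, if MvPolynomial.eval ((Fin.consEquiv (fun _ => F)) (t, y)) p ≠ 0
              then 1 else 0 := by
        intro y hy
        simp only [Finset.mem_filter] at hy
        calc Fintype.card F - 1
            ≤ (Finset.univ.filter
                (fun t : F => MvPolynomial.eval (Fin.cons t y) p ≠ 0)).card := hgood y hy.2
          _ = _ := by rw [Finset.card_filter]; exact Finset.sum_congr rfl fun t _ => (hre y t).symm
      calc (Fintype.card F - 1) ^ n * (Fintype.card F - 1)
          ≤ (Finset.univ.filter (fun y : Fin n → F => MvPolynomial.eval y g ≠ 0)).card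
              * (Fintype.card F - 1) :=
            Nat.mul_le_mul_right _ (ih g hg0 hgml)
        _ = ∑ _y ∈ Finset.univ.filter (fun y : Fin n → F => MvPolynomial.eval y g ≠ 0),
              (Fintype.card F - 1) := by rw [Finset.sum_const, smul_eq_mul]
        _ ≤ ∑ y ∈ Finset.univ.filter (fun y : Fin n → F => MvPolynomial.eval y g ≠ 0),
              ∑ t : F, if MvPolynomial.eval ((Fin.consEquiv (fun _ => F)) (t, y)) p ≠ 0
                then 1 else 0 := Finset.sum_le_sum step1
        _ ≤ _ := Finset.sum_le_sum_of_subset (Finset.filter_subset _ _)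
    calc (Fintype.card F - 1) ^ (n+1)
        = (Fintype.card F - 1) ^ n * (Fintype.card F - 1) := pow_succ _ _
      _ ≤ _ := key

lemma multilinear_nonzero_count' {F : Type*} [Field F] [Fintype F] [DecidableEq F]
    {ι : Type*} [Fintype ι] [DecidableEq ι]
    (h : MvPolynomial ι F) (hne : h ≠ 0) (hml : ∀ s ∈ h.support, ∀ j, s j ≤ 1) :
    (Fintype.card F - 1) ^ (Fintype.card ι) ≤ (Finset.univ.filter
      (fun y : ι → F => MvPolynomial.eval y h ≠ 0)).card := by
  set e : ι ≃ Fin (Fintype.card ι) := Fintype.equivFin ι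
  set p : MvPolynomial (Fin (Fintype.card ι)) F := MvPolynomial.rename e h with hp
  have hinj : Function.Injective (e : ι → Fin (Fintype.card ι)) := e.injective
  have hpne : p ≠ 0 := fun h0 => hne (MvPolynomial.rename_injective _ hinj (by simpa using h0))
  have hpml : ∀ s ∈ p.support, ∀ j, s j ≤ 1 := by
    intro s hs j
    rw [hp, MvPolynomial.support_rename_of_injective hinj, Finset.mem_image] at hs
    obtain ⟨s', hs', rfl⟩ := hs
    have : (Finsupp.mapDomain e s') (e (e.symm j)) = s' (e.symm j) :=
      Finsupp.mapDomain_apply hinj s' (e.symm j)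
    rw [e.apply_symm_apply] at this
    rw [this]
    exact hml s' hs' _
  have hcard : (Finset.univ.filter
        (fun x : Fin (Fintype.card ι) → F => MvPolynomial.eval x p ≠ 0)).card
      = (Finset.univ.filter (fun y : ι → F => MvPolynomial.eval y h ≠ 0)).card := by
    apply Finset.card_bij (fun x _ => x ∘ e)
    · intro x hx
      simp only [Finset.mem_filter, Finset.mem_univ, true_and] at hx ⊢
      rwa [hp, MvPolynomial.eval_rename] at hx
    · intro x1 h1 x2 h2 heq
      funext j
      have := congrFun heq (e.symm j)
      simpa [Function.comp, e.apply_symm_apply] using this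
    · intro y hy
      refine ⟨y ∘ e.symm, ?_, ?_⟩
      · simp only [Finset.mem_filter, Finset.mem_univ, true_and] at hy ⊢
        rw [hp, MvPolynomial.eval_rename]
        have : (y ∘ ⇑e.symm) ∘ ⇑e = y := by funext j; simp
        rw [this]
        exact hy
      · funext j; simp
  calc (Fintype.card F - 1) ^ (Fintype.card ι)
      ≤ _ := multilinear_nonzero_count (Fintype.card ι) p hpne hpml
    _ = _ := hcard



lemma stdChar_eq_pow (q : ℕ) [NeZero q] (t : ZMod q) :
    stdChar q t = Complex.exp (2 * Real.pi * Complex.I / q) ^ t.val := by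
  rw [stdChar, ← Complex.exp_nat_mul]
  congr 1
  ring

lemma abs_stdChar (q : ℕ) [NeZero q] (t : ZMod q) : ‖stdChar q t‖ = 1 := by
  rw [stdChar]
  have : 2 * Real.pi * Complex.I * (t.val : ℂ) / (q : ℂ)
      = ((2 * Real.pi * (t.val : ℝ) / (q : ℝ) : ℝ) : ℂ) * Complex.I := by
    push_cast
    ring
  rw [this, Complex.norm_exp_ofReal_mul_I]

lemma sum_stdChar (q : ℕ) [Fact q.Prime] : ∑ t : ZMod q, stdChar q t = 0 := by
  have hq : q ≠ 0 := (Fact.out : q.Prime).ne_zero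
  have hprim := Complex.isPrimitiveRoot_exp q hq
  have h1 : 1 < q := (Fact.out : q.Prime).one_lt
  have hsum := hprim.geom_sum_eq_zero h1
  calc ∑ t : ZMod q, stdChar q t
      = ∑ k ∈ Finset.range q, Complex.exp (2 * Real.pi * Complex.I / q) ^ k := by
        apply Finset.sum_nbij' (i := fun t : ZMod q => t.val) (j := fun k : ℕ => (k : ZMod q))
        · intro t _; exact Finset.mem_range.2 (ZMod.val_lt t)
        · intro k _; exact Finset.mem_univ _
        · intro t _; exact ZMod.natCast_rightInverse t
        · intro k hk; exact ZMod.val_cast_of_lt (Finset.mem_range.1 hk)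
        · intro t _; exact stdChar_eq_pow q t
    _ = 0 := hsum

lemma sum_stdChar_affine (q : ℕ) [Fact q.Prime] (c d : ZMod q) (hc : c ≠ 0) :
    ∑ t : ZMod q, stdChar q (c * t + d) = 0 := by
  have hbij : Function.Bijective (fun t : ZMod q => c * t + d) := by
    constructor
    · intro t1 t2 h12
      exact mul_left_cancel₀ hc (by linear_combination h12)
    · intro s
      refine ⟨c⁻¹ * (s - d), ?_⟩
      field_simp
      ring
  rw [Fintype.sum_bijective _ hbij (fun t => stdChar q (c * t + d)) (stdChar q) (fun t => rfl)]
  exact sum_stdChar q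

/-- if `Q(x₁,…,x_N) = x_i·h(x_{≠i}) + R(x_{≠i})` with `h` a nonzero
multilinear polynomial in the variables `x_j (j ≠ i)` and `R` arbitrary, then for every
`λ ≠ 0` the Fourier coefficient satisfies
`|E_x ψ(λ·Q(x))| ≤ Pr_x[h(x_{≠i}) = 0] ≤ (N−1)/q`. -/
theorem stmt_9 (q N : ℕ) [Fact (Nat.Prime q)] (hN : 1 ≤ N) (i : Fin N)
    (h : MvPolynomial {j : Fin N // j ≠ i} (ZMod q))
    (hml : ∀ s ∈ h.support, ∀ j, s j ≤ 1) (hne : h ≠ 0)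
    (R : ({j : Fin N // j ≠ i} → ZMod q) → ZMod q)
    (Q : (Fin N → ZMod q) → ZMod q)
    (hQ : ∀ x : Fin N → ZMod q,
      Q x = x i * MvPolynomial.eval (fun j => x j.1) h + R (fun j => x j.1))
    (lam : ZMod q) (hlam : lam ≠ 0) :
    ‖(∑ x : Fin N → ZMod q, stdChar q (lam * Q x)) / (q : ℂ) ^ N‖
        ≤ ((Finset.univ.filter
              (fun x : Fin N → ZMod q =>
                MvPolynomial.eval (fun j => x j.1) h = 0)).card : ℝ) / (q : ℝ) ^ N ∧
      ((Finset.univ.filter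
          (fun x : Fin N → ZMod q =>
            MvPolynomial.eval (fun j => x j.1) h = 0)).card : ℝ) / (q : ℝ) ^ N
        ≤ ((N : ℝ) - 1) / (q : ℝ) := by
  obtain ⟨n, rfl⟩ : ∃ n, N = n + 1 := ⟨N - 1, by omega⟩
  have hqprime : q.Prime := Fact.out
  have hq2 : 2 ≤ q := hqprime.two_le
  have hcardF : Fintype.card (ZMod q) = q := ZMod.card q
  have hcardι : Fintype.card {j : Fin (n+1) // j ≠ i} = n := by
    rw [Fintype.card_subtype_compl, Fintype.card_subtype_eq, Fintype.card_fin]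
    omega
  set E := Equiv.funSplitAt i (ZMod q) with hE
  have hres : ∀ z : ZMod q × ({j : Fin (n+1) // j ≠ i} → ZMod q),
      (fun j : {j : Fin (n+1) // j ≠ i} => (E.symm z) j.1) = z.2 := by
    intro z
    funext j
    simp [hE, Equiv.funSplitAt, Equiv.piSplitAt, j.2]
  have hati : ∀ z : ZMod q × ({j : Fin (n+1) // j ≠ i} → ZMod q), (E.symm z) i = z.1 := by
    intro z
    simp [hE, Equiv.funSplitAt, Equiv.piSplitAt]
  set Zy := (Finset.univ.filter
    (fun y : {j : Fin (n+1) // j ≠ i} → ZMod q => MvPolynomial.eval y h = 0)).card with hZy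
  set NZ := (Finset.univ.filter
    (fun y : {j : Fin (n+1) // j ≠ i} → ZMod q => MvPolynomial.eval y h ≠ 0)).card with hNZ
  have hZNZ : Zy + NZ = q ^ n := by
    rw [hZy, hNZ, Finset.card_filter_add_card_filter_not, Finset.card_univ,
      Fintype.card_fun, hcardF, hcardι]
  have hNZge : (q - 1) ^ n ≤ NZ := by
    have := multilinear_nonzero_count' h hne hml
    rwa [hcardF, hcardι] at this
  have hZyle : Zy ≤ q ^ n - (q - 1) ^ n := by omega
  have hcardx : (Finset.univ.filter
      (fun x : Fin (n+1) → ZMod q => MvPolynomial.eval (fun j => x j.1) h = 0)).card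
        = q * Zy := by
    rw [Finset.card_filter,
      ← E.symm.sum_comp (fun x : Fin (n+1) → ZMod q =>
        if MvPolynomial.eval (fun j => x j.1) h = 0 then 1 else 0),
      Fintype.sum_prod_type]
    have hpt : ∀ (t : ZMod q) (y : {j : Fin (n+1) // j ≠ i} → ZMod q),
        (if MvPolynomial.eval
            (fun j : {j : Fin (n+1) // j ≠ i} => (E.symm (t, y)) j.1) h = 0 then 1 else 0)
          = (if MvPolynomial.eval y h = 0 then 1 else 0) := by
      intro t y
      rw [hres (t, y)]
    simp_rw [hpt]
    rw [Finset.sum_const, Finset.card_univ, hcardF, smul_eq_mul]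
    congr 1
    rw [hZy, Finset.card_filter]
  have hinner : ∀ y : {j : Fin (n+1) // j ≠ i} → ZMod q,
      ∑ t : ZMod q, stdChar q (lam * (t * MvPolynomial.eval y h + R y))
        = if MvPolynomial.eval y h = 0 then (q : ℂ) * stdChar q (lam * R y) else 0 := by
    intro y
    by_cases hy : MvPolynomial.eval y h = 0
    · rw [if_pos hy]
      simp only [hy, mul_zero, zero_add]
      rw [Finset.sum_const, Finset.card_univ, hcardF, nsmul_eq_mul]
    · rw [if_neg hy]
      have hrw : ∀ t : ZMod q,
          lam * (t * MvPolynomial.eval y h + R y)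
            = (lam * MvPolynomial.eval y h) * t + lam * R y := by intro t; ring
      calc ∑ t : ZMod q, stdChar q (lam * (t * MvPolynomial.eval y h + R y))
          = ∑ t : ZMod q, stdChar q ((lam * MvPolynomial.eval y h) * t + lam * R y) :=
            Finset.sum_congr rfl fun t _ => by rw [hrw t]
        _ = 0 := sum_stdChar_affine q _ _ (mul_ne_zero hlam hy)
  have habsS : ‖∑ x : Fin (n+1) → ZMod q, stdChar q (lam * Q x)‖
      ≤ (q : ℝ) * Zy := by
    have hSrw : (∑ x : Fin (n+1) → ZMod q, stdChar q (lam * Q x))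
        = ∑ y : {j : Fin (n+1) // j ≠ i} → ZMod q,
            (if MvPolynomial.eval y h = 0 then (q : ℂ) * stdChar q (lam * R y) else 0) := by
      rw [← E.symm.sum_comp (fun x : Fin (n+1) → ZMod q => stdChar q (lam * Q x)),
        Fintype.sum_prod_type, Finset.sum_comm]
      refine Finset.sum_congr rfl fun y _ => ?_
      rw [← hinner y]
      refine Finset.sum_congr rfl fun t _ => ?_
      rw [hQ, hres (t, y), hati (t, y)]
    rw [hSrw]
    calc ‖∑ y : {j : Fin (n+1) // j ≠ i} → ZMod q,
            (if MvPolynomial.eval y h = 0 then (q : ℂ) * stdChar q (lam * R y) else 0)‖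
        ≤ ∑ y : {j : Fin (n+1) // j ≠ i} → ZMod q, ‖
            (if MvPolynomial.eval y h = 0 then (q : ℂ) * stdChar q (lam * R y) else 0)‖ :=
          norm_sum_le _ _
      _ = ∑ y : {j : Fin (n+1) // j ≠ i} → ZMod q,
            (if MvPolynomial.eval y h = 0 then (q : ℝ) else 0) := by
          refine Finset.sum_congr rfl fun y _ => ?_
          by_cases hy : MvPolynomial.eval y h = 0
          · rw [if_pos hy, if_pos hy, norm_mul, abs_stdChar, mul_one, Complex.norm_natCast]
          · rw [if_neg hy, if_neg hy, norm_zero]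
      _ = ∑ _y ∈ Finset.univ.filter
            (fun y : {j : Fin (n+1) // j ≠ i} → ZMod q => MvPolynomial.eval y h = 0),
            (q : ℝ) := (Finset.sum_filter _ _).symm
      _ = (q : ℝ) * Zy := by rw [Finset.sum_const, nsmul_eq_mul, hZy, mul_comm]
  have hq0N : 0 < q := hqprime.pos
  have hq1N : 1 ≤ q := hqprime.one_lt.le
  have hq0R : (0:ℝ) < (q:ℝ) := by exact_mod_cast hq0N
  have hqn : (0:ℝ) < (q:ℝ) ^ n := pow_pos hq0R n
  have hZyR : (Zy : ℝ) ≤ (q:ℝ)^n - ((q:ℝ)-1)^n := by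
    have hle : (q-1)^n ≤ q^n := Nat.pow_le_pow_left (Nat.sub_le q 1) n
    calc (Zy:ℝ) ≤ ((q^n - (q-1)^n : ℕ) : ℝ) := Nat.cast_le.2 hZyle
      _ = (q:ℝ)^n - ((q:ℝ)-1)^n := by
          rw [Nat.cast_sub hle, Nat.cast_pow, Nat.cast_pow,
            Nat.cast_sub hq1N, Nat.cast_one]
  have hbern : 1 - (n:ℝ)/(q:ℝ) ≤ (((q:ℝ)-1)/(q:ℝ))^n := by
    have h2 : (-2:ℝ) ≤ -(1/(q:ℝ)) := by
      have h1 : 1/(q:ℝ) ≤ 1 := by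
        rw [div_le_one hq0R]
        exact_mod_cast hq1N
      linarith
    have hb := one_add_mul_le_pow h2 n
    have heq : (1 + -(1/(q:ℝ))) = ((q:ℝ)-1)/(q:ℝ) := by field_simp; ring
    rw [heq] at hb
    calc 1 - (n:ℝ)/(q:ℝ) = 1 + (n:ℝ) * (-(1/(q:ℝ))) := by ring
      _ ≤ _ := hb
  have hbern2 : (q:ℝ)*((q:ℝ)^n) - (n:ℝ)*(q:ℝ)^n ≤ ((q:ℝ)-1)^n * (q:ℝ) := by
    have hmul := mul_le_mul_of_nonneg_right hbern
      (le_of_lt (by positivity : (0:ℝ) < (q:ℝ)^n * q))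
    calc (q:ℝ)*((q:ℝ)^n) - (n:ℝ)*(q:ℝ)^n = (1 - (n:ℝ)/(q:ℝ)) * ((q:ℝ)^n * q) := by
          field_simp
      _ ≤ (((q:ℝ)-1)/(q:ℝ))^n * ((q:ℝ)^n * q) := hmul
      _ = ((q:ℝ)-1)^n * (q:ℝ) := by rw [div_pow]; field_simp
  constructor
  · rw [norm_div, norm_pow, Complex.norm_natCast]
    have hnum : ‖∑ x : Fin (n+1) → ZMod q, stdChar q (lam * Q x)‖
        ≤ (((Finset.univ.filter
            (fun x : Fin (n+1) → ZMod q =>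
              MvPolynomial.eval (fun j => x j.1) h = 0)).card : ℕ) : ℝ) := by
      rw [hcardx]
      push_cast
      exact habsS
    gcongr
  · rw [hcardx]
    push_cast
    rw [pow_succ]
    have hrw2 : ((q:ℝ) * (Zy:ℝ)) / ((q:ℝ)^n * (q:ℝ)) = (Zy:ℝ)/(q:ℝ)^n := by
      field_simp
    rw [hrw2, div_le_div_iff₀ hqn hq0R]
    nlinarith [mul_le_mul_of_nonneg_right hZyR hq0R.le]
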